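/- Each word s_n of a standard sequence is primitive, i.e., s_n cannot be written as u^k for any word u and integer k ≥ 2. -/

import Mathlib

/-- Letters: `a` is `false`, `b` is `true`. -/
abbrev Word := List Bool

/-- `wpow w k` is the `k`-fold concatenation `w^k`. -/
def wpow (w : Word) (k : ℕ) : Word := (List.replicate k w).flatten

lemma wpow_succ (u : Word) (k : ℕ) : wpow u (k+1) = u ++ wpow u k := by
  simp [wpow, List.replicate_succ]

lemma count_wpow (u : Word) (k : ℕ) (c : Bool) :
    (wpow u k).count c = k * u.count c := by
  induction k with
  | zero => simp [wpow]
  | succ k ih => rw [wpow_succ, List.count_append, ih]; ring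

lemma length_wpow (u : Word) (k : ℕ) :
    (wpow u k).length = k * u.length := by
  induction k with
  | zero => simp [wpow]
  | succ k ih => rw [wpow_succ, List.length_append, ih]; ring

/-- Each word `sₙ` of a standard sequence is primitive: if `sₙ = u^k` then `k = 1`. -/
theorem standard_word_primitive (d : ℤ → ℕ) (s : ℤ → Word)
    (hd : ∀ n : ℤ, 1 ≤ n → 1 ≤ d n)
    (hs1 : s (-1) = [true]) (hs0 : s 0 = [false])
    (hs : ∀ n : ℤ, 1 ≤ n → s n = wpow (s (n - 1)) (d n) ++ s (n - 2)) :
    ∀ n : ℤ, -1 ≤ n → ∀ (u : Word) (k : ℕ), s n = wpow u k → k = 1 := by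
  have key : ∀ n : ℤ, 0 ≤ n →
      ((s n).count false : ℤ) * (s (n-1)).count true
        - ((s n).count true : ℤ) * (s (n-1)).count false = 1 ∨
      ((s n).count false : ℤ) * (s (n-1)).count true
        - ((s n).count true : ℤ) * (s (n-1)).count false = -1 := by
    refine Int.le_induction (motive := fun n _ =>
      ((s n).count false : ℤ) * (s (n-1)).count true
        - ((s n).count true : ℤ) * (s (n-1)).count false = 1 ∨
      ((s n).count false : ℤ) * (s (n-1)).count true
        - ((s n).count true : ℤ) * (s (n-1)).count false = -1) ?_ ?_
    · left
      norm_num [hs0, hs1]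
    · intro n hn ih
      have h1 : (1:ℤ) ≤ n + 1 := by linarith
      have hrec := hs (n+1) h1
      have e1 : (n:ℤ) + 1 - 1 = n := by ring
      have e2 : (n:ℤ) + 1 - 2 = n - 1 := by ring
      rw [e1, e2] at hrec
      have cf : ((s (n+1)).count false : ℤ)
          = (d (n+1) : ℤ) * (s n).count false + (s (n-1)).count false := by
        rw [hrec, List.count_append, count_wpow]; push_cast; ring
      have ct : ((s (n+1)).count true : ℤ)
          = (d (n+1) : ℤ) * (s n).count true + (s (n-1)).count true := by
        rw [hrec, List.count_append, count_wpow]; push_cast; ring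
      rw [e1, cf, ct]
      rcases ih with h | h
      · right; linear_combination -h
      · left; linear_combination -h
  intro n hn u k hku
  rcases eq_or_lt_of_le hn with h | h
  · -- n = -1
    have hsn : s n = [true] := by rw [← h, hs1]
    have hlen : (1:ℕ) = k * u.length := by
      have := congrArg List.length hku
      rw [hsn] at hku
      simpa [hsn, length_wpow] using congrArg List.length hku
    exact Nat.eq_one_of_mul_eq_one_right hlen.symm
  · -- 0 ≤ n
    have hn0 : (0:ℤ) ≤ n := by linarith
    have hdvd : (k:ℤ) ∣ ((s n).count false : ℤ) * (s (n-1)).count true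
        - ((s n).count true : ℤ) * (s (n-1)).count false := by
      refine ⟨(u.count false : ℤ) * (s (n-1)).count true
        - (u.count true : ℤ) * (s (n-1)).count false, ?_⟩
      rw [hku, count_wpow, count_wpow]
      push_cast; ring
    have hone : (k:ℤ) ∣ 1 := by
      rcases key n hn0 with h' | h'
      · rwa [h'] at hdvd
      · rw [h'] at hdvd
        exact (dvd_neg).mp hdvd
    have : k ∣ 1 := by exact_mod_cast hone
    exact Nat.dvd_one.mp this
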